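/- Let H be a complex Hilbert space, X ∈ B(H) a normal operator (X*X = XX*), and T₀, T₁ ∈ B(H). Set P := 1 + X*X (a positive invertible operator), T̃₀ := P^{1/2} T₁ P^{−1/2} and T̃₁ := P^{−1/2} T₀ P^{1/2}, and let T = [[T₀, XT₁−T₀X],[0,T₁]] and T̃ = [[T̃₀, X*T̃₁−T̃₀X*],[0,T̃₁]] act on H ⊕ H. Then the block operator U := [[X*P^{−1/2}, P^{−1/2}],[P^{−1/2}, −P^{−1/2}X]] on H ⊕ H is unitary and UTU* = T̃. -/

import Mathlib

set_option maxHeartbeats 2000000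
set_option synthInstance.maxHeartbeats 1000000

open ContinuousLinearMap

noncomputable def blockOp {H₀ H₁ K₀ K₁ : Type*}
    [NormedAddCommGroup H₀] [InnerProductSpace ℂ H₀]
    [NormedAddCommGroup H₁] [InnerProductSpace ℂ H₁]
    [NormedAddCommGroup K₀] [InnerProductSpace ℂ K₀]
    [NormedAddCommGroup K₁] [InnerProductSpace ℂ K₁]
    (A : H₀ →L[ℂ] K₀) (B : H₁ →L[ℂ] K₀) (C : H₀ →L[ℂ] K₁) (D : H₁ →L[ℂ] K₁) :
    WithLp 2 (H₀ × H₁) →L[ℂ] WithLp 2 (K₀ × K₁) :=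
  (((WithLp.prodContinuousLinearEquiv 2 ℂ K₀ K₁).symm : (K₀ × K₁) →L[ℂ] WithLp 2 (K₀ × K₁)) ∘L
    ((A.coprod B).prod (C.coprod D))) ∘L
    ((WithLp.prodContinuousLinearEquiv 2 ℂ H₀ H₁ : WithLp 2 (H₀ × H₁) →L[ℂ] (H₀ × H₁)))

open Polynomial in
lemma commute_aeval' {R A : Type*} [CommSemiring R] [Semiring A] [Algebra R A] {a b : A}
    (h : Commute b a) (p : R[X]) : Commute b (aeval a p) := by
  have halg : ∀ r : R, Commute b (algebraMap R A r) := fun r ↦ (Algebra.commutes r b).symm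
  induction p using Polynomial.induction_on with
  | C r => simpa using halg r
  | add p q hp hq => simpa [map_add] using hp.add_right hq
  | monomial n r _ =>
      simp only [map_mul, map_pow, aeval_C, aeval_X]
      exact (halg r).mul_right (h.pow_right (n + 1))

open Polynomial in
lemma commute_cfc_real' {A : Type*} [CStarAlgebra A] {a b : A}
    (ha : IsSelfAdjoint a) (h : Commute b a) (f : ℝ → ℝ) : Commute b (cfc f a) := by
  by_cases hf : ContinuousOn f (spectrum ℝ a)
  · rw [cfc_apply f a ha hf]
    suffices H : ∀ g : C(spectrum ℝ a, ℝ), Commute b (cfcHom ha g) from H _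
    have hc : Continuous (cfcHom ha (R := ℝ)) := (cfcHom_isClosedEmbedding ha).continuous
    have hclosed : IsClosed {g : C(spectrum ℝ a, ℝ) | Commute b (cfcHom ha (R := ℝ) g)} :=
      isClosed_eq ((continuous_mul_left b).comp hc) ((continuous_mul_right b).comp hc)
    have hpoly : (polynomialFunctions (spectrum ℝ a) : Set C(spectrum ℝ a, ℝ))
        ⊆ {g | Commute b (cfcHom ha (R := ℝ) g)} := by
      rw [polynomialFunctions_coe]
      rintro - ⟨p, rfl⟩
      have h2 : cfcHom ha (R := ℝ) (p.toContinuousMapOn (spectrum ℝ a)) = aeval a p := by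
        rw [← cfc_polynomial p a ha, cfc_apply (R := ℝ) p.eval a ha p.continuous.continuousOn]
        congr 1
      simp only [Set.mem_setOf_eq, toContinuousMapOnAlgHom_apply, h2]
      exact commute_aeval' h p
    intro g
    have : g ∈ (polynomialFunctions (spectrum ℝ a)).topologicalClosure := by
      rw [polynomialFunctions.topologicalClosure (spectrum ℝ a)]; trivial
    exact closure_minimal hpoly hclosed this
  · rw [cfc_apply_of_not_continuousOn a hf]
    exact Commute.zero_right b

lemma commute_of_inv' {M : Type*} [Monoid M] {a b c : M} (h : Commute b a)
    (h1 : a * c = 1) (h2 : c * a = 1) : Commute b c := by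
  calc b * c = c * a * b * c := by rw [h2, one_mul]
    _ = c * (a * b) * c := by rw [mul_assoc c a b]
    _ = c * (b * a) * c := by rw [← h.eq]
    _ = c * b * (a * c) := by rw [← mul_assoc c b a, mul_assoc (c * b) a c]
    _ = c * b := by rw [h1, mul_one]

section BlockLemmas

variable {H₀ H₁ K₀ K₁ L₀ L₁ : Type*}
    [NormedAddCommGroup H₀] [InnerProductSpace ℂ H₀]
    [NormedAddCommGroup H₁] [InnerProductSpace ℂ H₁]
    [NormedAddCommGroup K₀] [InnerProductSpace ℂ K₀]
    [NormedAddCommGroup K₁] [InnerProductSpace ℂ K₁]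
    [NormedAddCommGroup L₀] [InnerProductSpace ℂ L₀]
    [NormedAddCommGroup L₁] [InnerProductSpace ℂ L₁]

lemma blockOp_apply_fst' (A : H₀ →L[ℂ] K₀) (B : H₁ →L[ℂ] K₀) (C : H₀ →L[ℂ] K₁) (D : H₁ →L[ℂ] K₁)
    (x : WithLp 2 (H₀ × H₁)) : (blockOp A B C D x).fst = A x.fst + B x.snd := rfl

lemma blockOp_apply_snd' (A : H₀ →L[ℂ] K₀) (B : H₁ →L[ℂ] K₀) (C : H₀ →L[ℂ] K₁) (D : H₁ →L[ℂ] K₁)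
    (x : WithLp 2 (H₀ × H₁)) : (blockOp A B C D x).snd = C x.fst + D x.snd := rfl

lemma blockOp_comp' (A : K₀ →L[ℂ] L₀) (B : K₁ →L[ℂ] L₀) (C : K₀ →L[ℂ] L₁) (D : K₁ →L[ℂ] L₁)
    (A' : H₀ →L[ℂ] K₀) (B' : H₁ →L[ℂ] K₀) (C' : H₀ →L[ℂ] K₁) (D' : H₁ →L[ℂ] K₁) :
    blockOp A B C D ∘L blockOp A' B' C' D'
      = blockOp (A ∘L A' + B ∘L C') (A ∘L B' + B ∘L D')
          (C ∘L A' + D ∘L C') (C ∘L B' + D ∘L D') := by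
  ext x
  refine (WithLp.ext_iff 2).mpr (Prod.ext ?_ ?_)
  · show (blockOp A B C D (blockOp A' B' C' D' x)).fst = (blockOp _ _ _ _ x).fst
    simp [blockOp_apply_fst', blockOp_apply_snd', map_add]
    abel
  · show (blockOp A B C D (blockOp A' B' C' D' x)).snd = (blockOp _ _ _ _ x).snd
    simp [blockOp_apply_fst', blockOp_apply_snd', map_add]
    abel

lemma blockOp_one' :
    (blockOp (1 : H₀ →L[ℂ] H₀) (0 : H₁ →L[ℂ] H₀) (0 : H₀ →L[ℂ] H₁) (1 : H₁ →L[ℂ] H₁)) = 1 := by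
  ext x
  refine (WithLp.ext_iff 2).mpr (Prod.ext ?_ ?_)
  · show (blockOp _ _ _ _ x).fst = x.fst
    simp [blockOp_apply_fst']
  · show (blockOp _ _ _ _ x).snd = x.snd
    simp [blockOp_apply_snd']

lemma blockOp_adjoint' [CompleteSpace H₀] [CompleteSpace H₁] [CompleteSpace K₀] [CompleteSpace K₁]
    (A : H₀ →L[ℂ] K₀) (B : H₁ →L[ℂ] K₀) (C : H₀ →L[ℂ] K₁) (D : H₁ →L[ℂ] K₁) :
    adjoint (blockOp A B C D)
      = blockOp (adjoint A) (adjoint C) (adjoint B) (adjoint D) := by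
  symm
  rw [eq_adjoint_iff]
  intro x y
  rw [WithLp.prod_inner_apply, WithLp.prod_inner_apply]
  simp only [WithLp.ofLp_fst, WithLp.ofLp_snd]
  rw [blockOp_apply_fst', blockOp_apply_snd',
    blockOp_apply_fst', blockOp_apply_snd']
  simp only [inner_add_left, inner_add_right, adjoint_inner_left]
  ring

lemma blockOp_congr' (A A' : H₀ →L[ℂ] K₀) (B B' : H₁ →L[ℂ] K₀) (C C' : H₀ →L[ℂ] K₁)
    (D D' : H₁ →L[ℂ] K₁) (hA : A = A') (hB : B = B') (hC : C = C') (hD : D = D') :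
    blockOp A B C D = blockOp A' B' C' D' := by
  rw [hA, hB, hC, hD]

end BlockLemmas

/-- for a normal `X`, with `P = 1 + X*X`, `Q = P^{1/2}` (the positive square
root), `T̃₀ = P^{1/2}T₁P^{-1/2}`, `T̃₁ = P^{-1/2}T₀P^{1/2}`, the block operator
`U = [[X*P^{-1/2}, P^{-1/2}],[P^{-1/2}, -P^{-1/2}X]]` is unitary and `UTU* = T̃`. -/
theorem stmt4 {H : Type*}
    [NormedAddCommGroup H] [InnerProductSpace ℂ H] [CompleteSpace H]
    (X T₀ T₁ : H →L[ℂ] H)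
    (hX : adjoint X ∘L X = X ∘L adjoint X)
    (Q Qinv : H →L[ℂ] H)
    (hQpos : Q.IsPositive)
    (hQsq : Q ∘L Q = 1 + adjoint X ∘L X)
    (hQQi : Q ∘L Qinv = 1) (hQiQ : Qinv ∘L Q = 1)
    (T' T'' : H →L[ℂ] H)
    (hT' : T' = Q ∘L T₁ ∘L Qinv) (hT'' : T'' = Qinv ∘L T₀ ∘L Q)
    (U : WithLp 2 (H × H) →L[ℂ] WithLp 2 (H × H))
    (hU : U = blockOp (adjoint X ∘L Qinv) Qinv Qinv (-(Qinv ∘L X))) :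
    adjoint U ∘L U = 1 ∧ U ∘L adjoint U = 1 ∧
    U ∘L blockOp T₀ (X ∘L T₁ - T₀ ∘L X) 0 T₁ ∘L adjoint U
      = blockOp T' (adjoint X ∘L T'' - T' ∘L adjoint X) 0 T'' := by
  set Y := adjoint X with hY
  -- basic multiplicative versions
  have hXY : X * Y = Y * X := by rw [mul_def, mul_def]; exact hX.symm
  have hQQi' : Q * Qinv = 1 := by rw [mul_def]; exact hQQi
  have hQiQ' : Qinv * Q = 1 := by rw [mul_def]; exact hQiQ
  have hQsq' : Q * Q = 1 + Y * X := by rw [mul_def, mul_def]; exact hQsq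
  -- selfadjointness facts
  have hQsa : adjoint Q = Q := isSelfAdjoint_iff'.mp hQpos.isSelfAdjoint
  have hadj1 : adjoint (1 : H →L[ℂ] H) = 1 := by rw [← star_eq_adjoint, star_one]
  have hadjmul : ∀ A B : H →L[ℂ] H, adjoint (A * B) = adjoint B * adjoint A := fun A B ↦ by
    rw [mul_def, adjoint_comp, mul_def]
  have hQia : adjoint Qinv = Qinv := by
    calc adjoint Qinv = (adjoint Qinv * adjoint Q) * Qinv := by
          rw [hQsa, mul_assoc, hQQi', mul_one]
      _ = adjoint (Q * Qinv) * Qinv := by rw [hadjmul]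
      _ = Qinv := by rw [hQQi', hadj1, one_mul]
  -- order facts
  have hQ0 : (0 : H →L[ℂ] H) ≤ Q := (nonneg_iff_isPositive Q).mpr hQpos
  have hYX0 : (0 : H →L[ℂ] H) ≤ Y * X := by
    rw [hY, ← star_eq_adjoint]
    exact star_mul_self_nonneg X
  have hP0 : (0 : H →L[ℂ] H) ≤ 1 + Y * X := by
    calc (0 : H →L[ℂ] H) ≤ 1 := zero_le_one
      _ ≤ 1 + Y * X := le_add_of_nonneg_right hYX0
  have hPsa : IsSelfAdjoint (1 + Y * X) := .of_nonneg hP0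
  -- X commutes with 1 + Y * X
  have hXP : Commute X (1 + Y * X) := by
    show X * (1 + Y * X) = (1 + Y * X) * X
    rw [mul_add, add_mul, mul_one, one_mul, ← mul_assoc, hXY]
  -- X commutes with Q via CFC
  have hXQ : Commute X Q := by
    have hQeq : CFC.sqrt (1 + Y * X) = Q := CFC.sqrt_unique hQsq' hQ0
    rw [← hQeq, CFC.sqrt_eq_cfc, cfc_nnreal_eq_real _ _ hP0]
    exact commute_cfc_real' hPsa hXP _
  have hXQi : Commute X Qinv := commute_of_inv' hXQ hQQi' hQiQ'
  have hYQ : Commute Y Q := by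
    have h1 := congrArg adjoint hXQ.eq
    rw [mul_def, mul_def, adjoint_comp, adjoint_comp, hQsa, ← hY, ← mul_def, ← mul_def] at h1
    exact h1.symm
  have hYQi : Commute Y Qinv := commute_of_inv' hYQ hQQi' hQiQ'
  -- rewrite rules
  have l1 : ∀ c : H →L[ℂ] H, Qinv * (X * c) = X * (Qinv * c) := fun c ↦ by
    rw [← mul_assoc, ← hXQi.eq, mul_assoc]
  have l1' : Qinv * X = X * Qinv := hXQi.eq.symm
  have l2 : ∀ c : H →L[ℂ] H, Qinv * (Y * c) = Y * (Qinv * c) := fun c ↦ by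
    rw [← mul_assoc, ← hYQi.eq, mul_assoc]
  have l2' : Qinv * Y = Y * Qinv := hYQi.eq.symm
  have l3 : ∀ c : H →L[ℂ] H, X * (Y * c) = Y * (X * c) := fun c ↦ by
    rw [← mul_assoc, hXY, mul_assoc]
  have l3' : X * Y = Y * X := hXY
  have l4 : Y * (X * (Qinv * Qinv)) = 1 - Qinv * Qinv := by
    have h14 : (1 + Y * X) * (Qinv * Qinv) = 1 := by
      rw [← hQsq', mul_assoc, ← mul_assoc Q Qinv Qinv, hQQi', one_mul, hQQi']
    rw [add_mul, one_mul, mul_assoc] at h14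
    rw [eq_sub_iff_add_eq, add_comm]
    exact h14
  have hQexp : Q = Qinv + Y * (X * Qinv) := by
    calc Q = Q * Q * Qinv := by rw [mul_assoc, hQQi', mul_one]
      _ = Qinv + Y * (X * Qinv) := by rw [hQsq', add_mul, one_mul, mul_assoc]
  -- adjoint of U
  have hUadj : adjoint U = blockOp (Qinv ∘L X) Qinv Qinv (-(Y ∘L Qinv)) := by
    rw [hU, blockOp_adjoint']
    refine blockOp_congr' _ _ _ _ _ _ _ _ ?_ ?_ ?_ ?_
    · rw [adjoint_comp, hQia, hY, adjoint_adjoint]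
    · exact hQia
    · exact hQia
    · rw [map_neg, adjoint_comp, hQia, hY]
  refine ⟨?_, ?_, ?_⟩
  · rw [hUadj, hU, blockOp_comp', ← blockOp_one']
    refine blockOp_congr' _ _ _ _ _ _ _ _ ?_ ?_ ?_ ?_ <;>
    · simp only [← mul_def, mul_neg, neg_mul, neg_neg, mul_add, add_mul, mul_sub, sub_mul,
        mul_one, one_mul, mul_assoc, l1, l1', l2, l2', l3, l3', l4]
      abel
  · rw [hUadj, hU, blockOp_comp', ← blockOp_one']
    refine blockOp_congr' _ _ _ _ _ _ _ _ ?_ ?_ ?_ ?_ <;>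
    · simp only [← mul_def, mul_neg, neg_mul, neg_neg, mul_add, add_mul, mul_sub, sub_mul,
        mul_one, one_mul, mul_assoc, l1, l1', l2, l2', l3, l3', l4]
      abel
  · rw [hUadj, hU, hT', hT'', blockOp_comp', blockOp_comp']
    refine blockOp_congr' _ _ _ _ _ _ _ _ ?_ ?_ ?_ ?_ <;>
    · simp only [← mul_def, hQexp, mul_neg, neg_mul, neg_neg, mul_add, add_mul, mul_sub, sub_mul,
        mul_one, one_mul, zero_mul, mul_zero, add_zero, zero_add, mul_assoc,
        l1, l1', l2, l2', l3, l3', l4]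
      abel
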